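/- Let S : ℝ → ℂ → ℂ satisfy the one-parameter group law S(t+u, z) = S(t, S(u, z)) with S(0, z) = z, together with the symmetry S(−t, z) = conj(S(t, conj(z))) for all t ∈ ℝ and z in the domain. Define γ(t, x) = S(−t/2, x) for real x. Then: (i) for all t and all real x, S(t, γ(t, x)) = conj(γ(t, x)), so the point γ(t,x) lies on the curve Γₜ = { z : conj(z) = S(t, z) }; and (ii) if moreover ∂ₜS(t, z) = −2i·v(S(t, z)) for some function v, then ∂ₜγ(t, x) = i·v(γ(t, x)). -/

import Mathlib

/-- Canonical parametrization: γ(t,x) = S(−t/2, x) lies on the curve Γₜ = {z : conj z = S(t,z)},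
and if ∂ₜS(t,z) = −2i·v(S(t,z)) then ∂ₜγ(t,x) = i·v(γ(t,x)). -/
theorem stmt7 (S : ℝ → ℂ → ℂ) (v : ℂ → ℂ)
    (hgroup : ∀ t u : ℝ, ∀ z : ℂ, S (t + u) z = S t (S u z))
    (hid : ∀ z : ℂ, S 0 z = z)
    (hsym : ∀ t : ℝ, ∀ z : ℂ, S (-t) z = starRingEnd ℂ (S t (starRingEnd ℂ z)))
    (γ : ℝ → ℝ → ℂ) (hγ : ∀ t x : ℝ, γ t x = S (-t / 2) (x : ℂ)) :
    (∀ t x : ℝ, S t (γ t x) = starRingEnd ℂ (γ t x)) ∧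
      ((∀ t : ℝ, ∀ z : ℂ, HasDerivAt (fun u => S u z) (-2 * Complex.I * v (S t z)) t) →
        ∀ t x : ℝ, HasDerivAt (fun u => γ u x) (Complex.I * v (γ t x)) t) := by
  constructor
  · intro t x
    have h1 : S t (γ t x) = S (t / 2) (x : ℂ) := by
      rw [hγ, ← hgroup]
      ring_nf
    have h2 : γ t x = starRingEnd ℂ (S (t / 2) (x : ℂ)) := by
      have := hsym (t / 2) (x : ℂ)
      rw [Complex.conj_ofReal] at this
      rw [hγ, neg_div]
      exact this
    rw [h1, h2, Complex.conj_conj]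
  · intro hder t x
    -- γ u x = f (g u) with f s = S s x, g u = -u/2
    have hf : HasDerivAt (fun s => S s (x : ℂ))
        (-2 * Complex.I * v (S (-t / 2) (x : ℂ))) (-t / 2) := hder (-t / 2) _
    have hg : HasDerivAt (fun u : ℝ => -u / 2) (-1 / 2 : ℝ) t := by
      simpa using ((hasDerivAt_id t).neg.div_const 2)
    have hcomp := hf.scomp t hg
    have heq : (fun u : ℝ => γ u x) = fun u => S (-u / 2) (x : ℂ) := by
      funext u; exact hγ u x
    rw [heq]
    convert hcomp using 1
    · rfl
    · rfl
    rw [← hγ]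
    push_cast [Complex.real_smul]
    ring
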